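/- Let a ∈ ℂ. There exists a point x = (x_1,…,x_n) ∈ ℂ^n with x ≠ 0 such that all n partial derivatives ∂F_a/∂x_i vanish at x, if and only if a^{d/γ} · ∏_{i=1}^{k} (β_i w_i)^{β_i w_i/γ} + (−1)^{d/γ − 1} · d^{d/γ} = 0. (This describes the discriminant of the one-parameter family of Calabi–Yau hypersurfaces.) -/

import Mathlib

/- Statement 0: discriminant of the one-parameter family of Calabi–Yau
hypersurfaces F_a = Σ x_i^{d/w_i} + a ∏_{i<k} x_i^{β_i}. -/

private lemma deriv_aux {n : ℕ} (x : Fin n → ℂ) (i : Fin n) (d : ℕ) (w β : Fin n → ℕ)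
    (a : ℂ) :
    deriv (fun t : ℂ =>
      (∑ j, Function.update x i t j ^ (d / w j)) +
        a * ∏ j, Function.update x i t j ^ β j) (x i)
      = ((d / w i : ℕ) : ℂ) * x i ^ (d / w i - 1) +
        a * (((β i : ℕ) : ℂ) * x i ^ (β i - 1) * ∏ j ∈ Finset.univ.erase i, x j ^ β j) := by
  have hfun : (fun t : ℂ =>
      (∑ j, Function.update x i t j ^ (d / w j)) +
        a * ∏ j, Function.update x i t j ^ β j)
      = fun t : ℂ => (t ^ (d / w i) + ∑ j ∈ Finset.univ.erase i, x j ^ (d / w j)) +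
          a * (t ^ β i * ∏ j ∈ Finset.univ.erase i, x j ^ β j) := by
    funext t
    have hs : ∑ j, Function.update x i t j ^ (d / w j)
        = t ^ (d / w i) + ∑ j ∈ Finset.univ.erase i, x j ^ (d / w j) := by
      rw [← Finset.add_sum_erase _ _ (Finset.mem_univ i), Function.update_self]
      congr 1
      refine Finset.sum_congr rfl fun j hj => ?_
      rw [Function.update_of_ne (Finset.ne_of_mem_erase hj)]
    have hp : ∏ j, Function.update x i t j ^ β j
        = t ^ β i * ∏ j ∈ Finset.univ.erase i, x j ^ β j := by
      rw [← Finset.mul_prod_erase _ _ (Finset.mem_univ i), Function.update_self]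
      congr 1
      refine Finset.prod_congr rfl fun j hj => ?_
      rw [Function.update_of_ne (Finset.ne_of_mem_erase hj)]
    rw [hs, hp]
  rw [hfun]
  have h1 : HasDerivAt (fun t : ℂ =>
      (t ^ (d / w i) + ∑ j ∈ Finset.univ.erase i, x j ^ (d / w j)) +
        a * (t ^ β i * ∏ j ∈ Finset.univ.erase i, x j ^ β j))
      (((d / w i : ℕ) : ℂ) * x i ^ (d / w i - 1) +
        a * (((β i : ℕ) : ℂ) * x i ^ (β i - 1) * ∏ j ∈ Finset.univ.erase i, x j ^ β j)) (x i) := by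
    have hA := (hasDerivAt_pow (d / w i) (x i)).add_const
      (∑ j ∈ Finset.univ.erase i, x j ^ (d / w j))
    have hB := ((hasDerivAt_pow (β i) (x i)).mul_const
      (∏ j ∈ Finset.univ.erase i, x j ^ β j)).const_mul a
    exact hA.add hB
  exact h1.deriv

private lemma bezout_finset {ι : Type*} [DecidableEq ι] (s : Finset ι) (f : ι → ℕ) :
    ∃ u : ι → ℤ, ∑ i ∈ s, u i * (f i : ℤ) = ((s.gcd f : ℕ) : ℤ) := by
  classical
  induction s using Finset.induction_on with
  | empty => exact ⟨0, by simp⟩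
  | @insert a s ha ih =>
    obtain ⟨u, hu⟩ := ih
    refine ⟨Function.update (fun i => Nat.gcdB (f a) (s.gcd f) * u i) a
      (Nat.gcdA (f a) (s.gcd f)), ?_⟩
    rw [Finset.sum_insert ha, Function.update_self]
    have hrest : ∑ i ∈ s, (Function.update (fun i => Nat.gcdB (f a) (s.gcd f) * u i) a
        (Nat.gcdA (f a) (s.gcd f))) i * (f i : ℤ)
        = Nat.gcdB (f a) (s.gcd f) * ∑ i ∈ s, u i * (f i : ℤ) := by
      rw [Finset.mul_sum]
      refine Finset.sum_congr rfl fun i hi => ?_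
      rw [Function.update_of_ne (by rintro rfl; exact ha hi)]
      ring
    rw [hrest, hu, Finset.gcd_insert]
    rw [show gcd (f a) (s.gcd f) = Nat.gcd (f a) (s.gcd f) from rfl, Nat.gcd_eq_gcd_ab]
    ring

theorem stmt_0 {n k : ℕ} (hn : 2 ≤ n) (hk2 : 2 ≤ k) (hkn : k ≤ n)
    (w β : Fin n → ℕ) (hw : ∀ i, 0 < w i)
    (hgcd : Finset.univ.gcd w = 1)
    (d : ℕ) (hd : d = ∑ i, w i) (hdvd : ∀ i, w i ∣ d)
    (hβpos : ∀ i : Fin n, (i : ℕ) < k → 0 < β i)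
    (hβ0 : ∀ i : Fin n, k ≤ (i : ℕ) → β i = 0)
    (hβd : ∑ i, β i * w i = d)
    (γ : ℕ) (hγ : γ = Finset.univ.gcd (fun i => β i * w i))
    (a : ℂ) :
    (∃ x : Fin n → ℂ, x ≠ 0 ∧ ∀ i : Fin n,
        deriv (fun t : ℂ =>
          (∑ j, Function.update x i t j ^ (d / w j)) +
            a * ∏ j, Function.update x i t j ^ β j) (x i) = 0) ↔
      a ^ (d / γ) * (∏ i, ((β i * w i : ℕ) : ℂ) ^ (β i * w i / γ)) +
        (-1 : ℂ) ^ (d / γ - 1) * (d : ℂ) ^ (d / γ) = 0 := by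
  classical
  have i0 : Fin n := ⟨0, by omega⟩
  have hi0k : ((⟨0, by omega⟩ : Fin n) : ℕ) < k := by simp; omega
  -- basic positivity facts
  have hd0 : 0 < d := by
    rw [hd]
    exact Finset.sum_pos (fun i _ => hw i) ⟨⟨0, by omega⟩, Finset.mem_univ _⟩
  have hwd_lt : ∀ i, w i < d := by
    intro i
    have h2 : ∃ j : Fin n, j ≠ i := by
      rcases Nat.eq_zero_or_pos (i : ℕ) with h | h
      · exact ⟨⟨1, by omega⟩, by intro he; apply_fun Fin.val at he; simp at he; omega⟩
      · exact ⟨⟨0, by omega⟩, by intro he; apply_fun Fin.val at he; simp at he; omega⟩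
    obtain ⟨j, hj⟩ := h2
    have hle : w j + w i ≤ ∑ l, w l := by
      rw [← Finset.sum_pair hj]
      exact Finset.sum_le_sum_of_subset (Finset.subset_univ _)
    have := hw j
    omega
  have hE2 : ∀ i, 2 ≤ d / w i := by
    intro i
    obtain ⟨m, hm⟩ := hdvd i
    have hwi := hw i
    have hlt := hwd_lt i
    have hm0 : m ≠ 0 := by rintro rfl; simp at hm; omega
    have hm1 : m ≠ 1 := by rintro rfl; simp at hm; omega
    rw [hm, Nat.mul_div_cancel_left _ hwi]
    omega
  have hγdvd : ∀ i, γ ∣ β i * w i := by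
    intro i
    rw [hγ]
    exact Finset.gcd_dvd (Finset.mem_univ i)
  have hγd : γ ∣ d := by
    rw [← hβd]
    exact Finset.dvd_sum fun i _ => hγdvd i
  have hγ0 : 0 < γ := by
    rcases Nat.eq_zero_or_pos γ with h | h
    · exfalso
      have h0 := Finset.gcd_eq_zero_iff.mp (hγ.symm.trans h)
      have := h0 ⟨0, by omega⟩ (Finset.mem_univ _)
      have hb := hβpos ⟨0, by omega⟩ hi0k
      have hw0 := hw ⟨0, by omega⟩
      simp at this
      omega
    · exact h
  have hN0 : 0 < d / γ := Nat.div_pos (Nat.le_of_dvd hd0 hγd) hγ0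
  obtain ⟨N', hN'⟩ : ∃ N', d / γ = N' + 1 := ⟨d / γ - 1, by omega⟩
  have hEm : ∀ i, (d / w i) * (β i * w i / γ) = β i * (d / γ) := by
    intro i
    have h1 : w i * (d / w i) = d := Nat.mul_div_cancel' (hdvd i)
    have h2 : γ * (β i * w i / γ) = β i * w i := Nat.mul_div_cancel' (hγdvd i)
    have h3 : γ * (d / γ) = d := Nat.mul_div_cancel' hγd
    have h4 : 0 < γ * w i := Nat.mul_pos hγ0 (hw i)
    apply Nat.eq_of_mul_eq_mul_left h4
    calc (γ * w i) * ((d / w i) * (β i * w i / γ))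
        = (w i * (d / w i)) * (γ * (β i * w i / γ)) := by ring
      _ = d * (β i * w i) := by rw [h1, h2]
      _ = (γ * (d / γ)) * (β i * w i) := by rw [h3]
      _ = (γ * w i) * (β i * (d / γ)) := by ring
  have hsumm : ∑ i, β i * w i / γ = d / γ := by
    apply Nat.eq_of_mul_eq_mul_left hγ0
    rw [Finset.mul_sum]
    calc ∑ i, γ * (β i * w i / γ) = ∑ i, β i * w i :=
          Finset.sum_congr rfl fun i _ => Nat.mul_div_cancel' (hγdvd i)
      _ = d := hβd
      _ = γ * (d / γ) := (Nat.mul_div_cancel' hγd).symm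
  have hdC : (d : ℂ) ≠ 0 := Nat.cast_ne_zero.mpr hd0.ne'
  have hEwC : ∀ i, ((d / w i : ℕ) : ℂ) * (w i : ℂ) = (d : ℂ) := by
    intro i
    have := Nat.div_mul_cancel (hdvd i)
    exact_mod_cast congrArg (Nat.cast : ℕ → ℂ) this
  set B := ∏ i, ((β i * w i : ℕ) : ℂ) ^ (β i * w i / γ) with hBdef
  -- product of the constants
  have hC_prod : ∏ i, (-(a * ((β i * w i : ℕ) : ℂ))) ^ (β i * w i / γ)
      = (-1 : ℂ) ^ (d / γ) * a ^ (d / γ) * B := by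
    calc ∏ i, (-(a * ((β i * w i : ℕ) : ℂ))) ^ (β i * w i / γ)
        = ∏ i, ((-1 : ℂ) ^ (β i * w i / γ) * a ^ (β i * w i / γ) *
            ((β i * w i : ℕ) : ℂ) ^ (β i * w i / γ)) := by
          refine Finset.prod_congr rfl fun i _ => ?_
          rw [show -(a * ((β i * w i : ℕ) : ℂ)) = (-1 : ℂ) * a * ((β i * w i : ℕ) : ℂ) by ring,
            mul_pow, mul_pow]
      _ = (∏ i, (-1 : ℂ) ^ (β i * w i / γ)) * (∏ i, a ^ (β i * w i / γ)) * B := by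
          rw [Finset.prod_mul_distrib, Finset.prod_mul_distrib]
      _ = (-1 : ℂ) ^ (d / γ) * a ^ (d / γ) * B := by
          rw [Finset.prod_pow_eq_pow_sum, Finset.prod_pow_eq_pow_sum, hsumm]
  have hq2 : ((-1 : ℂ)) ^ N' * (-1 : ℂ) ^ N' = 1 := by
    rw [← pow_add]
    exact Even.neg_one_pow ⟨N', rfl⟩
  constructor
  · -- forward direction
    rintro ⟨x, hx0, hder⟩
    have hi : ∀ i : Fin n, ((d / w i : ℕ) : ℂ) * x i ^ (d / w i - 1) +
        a * (((β i : ℕ) : ℂ) * x i ^ (β i - 1) * ∏ j ∈ Finset.univ.erase i, x j ^ β j) = 0 := by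
      intro i
      have := hder i
      rwa [deriv_aux] at this
    -- x j = 0 whenever its equation degenerates
    have hzd : ∀ j : Fin n, ((d / w j : ℕ) : ℂ) * x j ^ (d / w j - 1) = 0 → x j = 0 := by
      intro j h
      have hE : ((d / w j : ℕ) : ℂ) ≠ 0 := Nat.cast_ne_zero.mpr (by have := hE2 j; omega)
      have h2 := (mul_eq_zero.mp h).resolve_left hE
      exact pow_eq_zero_iff (by have := hE2 j; omega : d / w j - 1 ≠ 0) |>.mp h2
    have hzero : ∀ j : Fin n, k ≤ (j : ℕ) → x j = 0 := by
      intro j hj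
      have h := hi j
      rw [hβ0 j hj] at h
      simp only [Nat.cast_zero, zero_mul, mul_zero, add_zero] at h
      exact hzd j h
    have hall : ∀ i : Fin n, (i : ℕ) < k → x i ≠ 0 := by
      by_contra hcon
      push_neg at hcon
      obtain ⟨i1, hi1k, hi1⟩ := hcon
      apply hx0
      funext j
      show x j = 0
      by_cases hjk : (j : ℕ) < k
      · by_cases hji : j = i1
        · rw [hji]; exact hi1
        · have hQ : ∏ l ∈ Finset.univ.erase j, x l ^ β l = 0 := by
            apply Finset.prod_eq_zero (Finset.mem_erase.mpr ⟨Ne.symm hji, Finset.mem_univ i1⟩)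
            rw [hi1]
            exact zero_pow (hβpos i1 hi1k).ne'
          have h := hi j
          rw [hQ] at h
          simp only [mul_zero, add_zero] at h
          exact hzd j h
      · exact hzero j (le_of_not_gt hjk)
    set P := ∏ j, x j ^ β j with hPdef
    have hP : P ≠ 0 := by
      rw [hPdef, Finset.prod_ne_zero_iff]
      intro j _
      by_cases hjk : (j : ℕ) < k
      · exact pow_ne_zero _ (hall j hjk)
      · rw [hβ0 j (le_of_not_gt hjk)]; simp
    have hkey : ∀ i : Fin n, (i : ℕ) < k →
        (d : ℂ) * x i ^ (d / w i) = -(a * ((β i * w i : ℕ) : ℂ)) * P := by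
      intro i hik
      have h := hi i
      have hb1 : β i - 1 + 1 = β i := Nat.succ_pred_eq_of_pos (hβpos i hik)
      have hE1 : d / w i - 1 + 1 = d / w i := by have := hE2 i; omega
      have hx1 : x i ^ (d / w i - 1) * x i = x i ^ (d / w i) := by
        rw [← pow_succ, hE1]
      have hx2 : x i ^ (β i - 1) * x i = x i ^ β i := by
        rw [← pow_succ, hb1]
      have hqp : x i ^ β i * ∏ j ∈ Finset.univ.erase i, x j ^ β j = P := by
        rw [hPdef]; exact Finset.mul_prod_erase _ (fun j => x j ^ β j) (Finset.mem_univ i)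
      have hcast : ((β i * w i : ℕ) : ℂ) = ((β i : ℕ) : ℂ) * ((w i : ℕ) : ℂ) := by push_cast; ring
      calc (d : ℂ) * x i ^ (d / w i)
          = (x i * (w i : ℂ)) * (((d / w i : ℕ) : ℂ) * x i ^ (d / w i - 1) +
              a * (((β i : ℕ) : ℂ) * x i ^ (β i - 1) *
                ∏ j ∈ Finset.univ.erase i, x j ^ β j)) +
            (-(a * ((β i * w i : ℕ) : ℂ)) * P) := by
            rw [hcast, ← hqp, ← hx2, ← hx1, ← hEwC i]
            ring
        _ = -(a * ((β i * w i : ℕ) : ℂ)) * P := by rw [h, mul_zero, zero_add]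
    have hprodeq : ∏ i, ((d : ℂ) * x i ^ (d / w i)) ^ (β i * w i / γ)
        = ∏ i, (-(a * ((β i * w i : ℕ) : ℂ)) * P) ^ (β i * w i / γ) := by
      refine Finset.prod_congr rfl fun i _ => ?_
      by_cases hik : (i : ℕ) < k
      · rw [hkey i hik]
      · rw [hβ0 i (le_of_not_gt hik)]; simp
    have hL : ∏ i, ((d : ℂ) * x i ^ (d / w i)) ^ (β i * w i / γ)
        = (d : ℂ) ^ (d / γ) * P ^ (d / γ) := by
      calc ∏ i, ((d : ℂ) * x i ^ (d / w i)) ^ (β i * w i / γ)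
          = ∏ i, ((d : ℂ) ^ (β i * w i / γ) * (x i ^ β i) ^ (d / γ)) := by
            refine Finset.prod_congr rfl fun i _ => ?_
            rw [mul_pow, ← pow_mul, hEm i, pow_mul]
        _ = (∏ i, (d : ℂ) ^ (β i * w i / γ)) * ∏ i, (x i ^ β i) ^ (d / γ) :=
            Finset.prod_mul_distrib
        _ = (d : ℂ) ^ (d / γ) * P ^ (d / γ) := by
            rw [Finset.prod_pow_eq_pow_sum, hsumm, Finset.prod_pow]
    have hR : ∏ i, (-(a * ((β i * w i : ℕ) : ℂ)) * P) ^ (β i * w i / γ)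
        = ((-1 : ℂ) ^ (d / γ) * a ^ (d / γ) * B) * P ^ (d / γ) := by
      calc ∏ i, (-(a * ((β i * w i : ℕ) : ℂ)) * P) ^ (β i * w i / γ)
          = (∏ i, (-(a * ((β i * w i : ℕ) : ℂ))) ^ (β i * w i / γ)) *
              ∏ i, P ^ (β i * w i / γ) := by
            rw [← Finset.prod_mul_distrib]
            exact Finset.prod_congr rfl fun i _ => mul_pow _ _ _
        _ = ((-1 : ℂ) ^ (d / γ) * a ^ (d / γ) * B) * P ^ (d / γ) := by
            rw [hC_prod, Finset.prod_pow_eq_pow_sum, hsumm]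
    have hDN : (d : ℂ) ^ (d / γ) = (-1 : ℂ) ^ (d / γ) * a ^ (d / γ) * B := by
      have := hprodeq
      rw [hL, hR] at this
      exact mul_right_cancel₀ (pow_ne_zero _ hP) this
    rw [hN'] at hDN ⊢
    simp only [Nat.add_sub_cancel]
    rw [hDN]
    rw [pow_succ]
    linear_combination (-(a ^ (N' + 1) * B)) * hq2
  · -- reverse direction
    intro hcond
    rw [hN'] at hcond
    simp only [Nat.add_sub_cancel] at hcond
    have ha : a ≠ 0 := by
      rintro rfl
      rw [zero_pow (by omega : N' + 1 ≠ 0)] at hcond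
      simp only [zero_mul, zero_add] at hcond
      exact (mul_ne_zero (pow_ne_zero _ (by norm_num : (-1 : ℂ) ≠ 0))
        (pow_ne_zero _ hdC)) hcond
    set c : Fin n → ℂ := fun i => -(a * ((β i * w i : ℕ) : ℂ)) / d with hcdef
    set t : Fin n → ℂ := fun i => c i ^ (((d / w i : ℕ) : ℂ))⁻¹ with htdef
    have ht : ∀ i, t i ^ (d / w i) = c i := by
      intro i
      exact Complex.cpow_nat_inv_pow _ (by have := hE2 i; omega)
    have hc0 : ∀ i : Fin n, (i : ℕ) < k → c i ≠ 0 := by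
      intro i hik
      have hbw : β i * w i ≠ 0 := by
        have := hβpos i hik; have := hw i; positivity
      exact div_ne_zero (neg_ne_zero.mpr (mul_ne_zero ha (Nat.cast_ne_zero.mpr hbw))) hdC
    have ht0 : ∀ i : Fin n, (i : ℕ) < k → t i ≠ 0 := by
      intro i hik h
      apply hc0 i hik
      rw [← ht i, h]
      exact zero_pow (by have := hE2 i; omega)
    set T := ∏ i, t i ^ β i with hTdef
    have hprodc : ∏ i, c i ^ (β i * w i / γ)
        = ((-1 : ℂ) ^ (d / γ) * a ^ (d / γ) * B) / (d : ℂ) ^ (d / γ) := by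
      calc ∏ i, c i ^ (β i * w i / γ)
          = (∏ i, (-(a * ((β i * w i : ℕ) : ℂ))) ^ (β i * w i / γ)) /
              ∏ i, (d : ℂ) ^ (β i * w i / γ) := by
            rw [← Finset.prod_div_distrib]
            exact Finset.prod_congr rfl fun i _ => div_pow _ _ _
        _ = ((-1 : ℂ) ^ (d / γ) * a ^ (d / γ) * B) / (d : ℂ) ^ (d / γ) := by
            rw [hC_prod, Finset.prod_pow_eq_pow_sum, hsumm]
    have hTN : T ^ (d / γ) = 1 := by
      calc T ^ (d / γ) = ∏ i, (t i ^ β i) ^ (d / γ) := (Finset.prod_pow _ _ _).symm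
        _ = ∏ i, c i ^ (β i * w i / γ) := by
            refine Finset.prod_congr rfl fun i _ => ?_
            rw [← pow_mul, ← hEm i, pow_mul, ht i]
        _ = 1 := by
            rw [hprodc, div_eq_one_iff_eq (pow_ne_zero _ hdC), hN']
            rw [pow_succ]
            linear_combination ((-1 : ℂ) ^ N' * (-1)) * hcond + ((d : ℂ) ^ (N' + 1)) * hq2
    have hNe : d / γ ≠ 0 := hN0.ne'
    have hζ := Complex.isPrimitiveRoot_exp (d / γ) hNe
    have : NeZero (d / γ) := ⟨hNe⟩
    obtain ⟨ℓ, hℓlt, hℓ⟩ := hζ.eq_pow_of_pow_eq_one hTN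
    obtain ⟨u, hu⟩ := bezout_finset Finset.univ (fun i => β i * w i)
    rw [← hγ] at hu
    set θ : Fin n → ℂ := fun i =>
      2 * (Real.pi : ℂ) * Complex.I * (-(ℓ : ℂ) * (u i : ℂ) * (w i : ℂ)) / d with hθdef
    set ε : Fin n → ℂ := fun i => Complex.exp (θ i) with hεdef
    have hε1 : ∀ i, ε i ^ (d / w i) = 1 := by
      intro i
      rw [hεdef]
      simp only
      rw [← Complex.exp_nat_mul]
      have harg : ((d / w i : ℕ) : ℂ) * θ i
          = ((-ℓ * u i : ℤ) : ℂ) * (2 * (Real.pi : ℂ) * Complex.I) := by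
        rw [hθdef]
        simp only
        push_cast
        field_simp
        linear_combination (-((ℓ : ℂ) * (u i : ℂ))) * hEwC i
      rw [harg, Complex.exp_int_mul_two_pi_mul_I]
    have hNC : ((d / γ : ℕ) : ℂ) ≠ 0 := Nat.cast_ne_zero.mpr hNe
    have hγN : (γ : ℂ) * ((d / γ : ℕ) : ℂ) = (d : ℂ) := by
      have := Nat.mul_div_cancel' hγd
      exact_mod_cast congrArg (Nat.cast : ℕ → ℂ) this
    have hεβ : T * ∏ i, ε i ^ β i = 1 := by
      have h1 : ∏ i, ε i ^ β i = Complex.exp (∑ i, ((β i : ℕ) : ℂ) * θ i) := by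
        rw [Complex.exp_sum]
        exact Finset.prod_congr rfl fun i _ => (Complex.exp_nat_mul _ _).symm
      have hu' : ∑ i, ((u i : ℂ) * (((β i : ℕ) : ℂ) * ((w i : ℕ) : ℂ))) = (γ : ℂ) := by
        exact_mod_cast hu
      have h2 : ∑ i, ((β i : ℕ) : ℂ) * θ i
          = 2 * (Real.pi : ℂ) * Complex.I * (-(ℓ : ℂ)) * (γ : ℂ) / d := by
        rw [hθdef]
        simp only
        rw [show (2 * (Real.pi : ℂ) * Complex.I * (-(ℓ : ℂ)) * (γ : ℂ) / d)
            = (2 * (Real.pi : ℂ) * Complex.I * (-(ℓ : ℂ)) / d) *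
              ∑ i, ((u i : ℂ) * (((β i : ℕ) : ℂ) * ((w i : ℕ) : ℂ))) by rw [hu']; ring]
        rw [Finset.mul_sum]
        refine Finset.sum_congr rfl fun i _ => ?_
        ring
      rw [h1, h2, ← hℓ, ← Complex.exp_nat_mul, ← Complex.exp_add]
      rw [show (ℓ : ℂ) * (2 * (Real.pi : ℂ) * Complex.I / ((d / γ : ℕ) : ℂ)) +
          2 * (Real.pi : ℂ) * Complex.I * (-(ℓ : ℂ)) * (γ : ℂ) / d = 0 from ?_]
      · exact Complex.exp_zero
      · have hγC : (γ : ℂ) ≠ 0 := Nat.cast_ne_zero.mpr hγ0.ne'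
        rw [← hγN]
        field_simp
        ring
    set x : Fin n → ℂ := fun i => if (i : ℕ) < k then t i * ε i else 0 with hxdef
    have hPx : ∏ j, x j ^ β j = 1 := by
      calc ∏ j, x j ^ β j = ∏ j, (t j ^ β j * ε j ^ β j) := by
            refine Finset.prod_congr rfl fun j _ => ?_
            by_cases hj : (j : ℕ) < k
            · rw [hxdef]; simp only [if_pos hj]; rw [mul_pow]
            · rw [hβ0 j (le_of_not_gt hj)]; simp
        _ = T * ∏ j, ε j ^ β j := by rw [Finset.prod_mul_distrib]
        _ = 1 := hεβ
    refine ⟨x, ?_, ?_⟩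
    · intro h
      have hx0 : x ⟨0, by omega⟩ = 0 := by rw [h]; rfl
      rw [hxdef] at hx0
      simp only [if_pos hi0k] at hx0
      exact (mul_ne_zero (ht0 _ hi0k) (Complex.exp_ne_zero _)) hx0
    · intro i
      rw [deriv_aux]
      by_cases hik : (i : ℕ) < k
      · have hxi : x i = t i * ε i := by rw [hxdef]; simp only [if_pos hik]
        have hxne : x i ≠ 0 := by
          rw [hxi]; exact mul_ne_zero (ht0 i hik) (Complex.exp_ne_zero _)
        have hb1 : β i - 1 + 1 = β i := Nat.succ_pred_eq_of_pos (hβpos i hik)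
        have hE1 : d / w i - 1 + 1 = d / w i := by have := hE2 i; omega
        have hx1 : x i ^ (d / w i - 1) * x i = x i ^ (d / w i) := by rw [← pow_succ, hE1]
        have hx2 : x i ^ (β i - 1) * x i = x i ^ β i := by rw [← pow_succ, hb1]
        have hxE : x i ^ (d / w i) = c i := by
          rw [hxi, mul_pow, ht i, hε1 i, mul_one]
        have hxQ : x i ^ β i * ∏ j ∈ Finset.univ.erase i, x j ^ β j = 1 :=
          (Finset.mul_prod_erase Finset.univ (fun j => x j ^ β j) (Finset.mem_univ i)).trans hPx
        have hmain : x i * (((d / w i : ℕ) : ℂ) * x i ^ (d / w i - 1) +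
            a * (((β i : ℕ) : ℂ) * x i ^ (β i - 1) *
              ∏ j ∈ Finset.univ.erase i, x j ^ β j)) = 0 := by
          calc x i * (((d / w i : ℕ) : ℂ) * x i ^ (d / w i - 1) +
              a * (((β i : ℕ) : ℂ) * x i ^ (β i - 1) *
                ∏ j ∈ Finset.univ.erase i, x j ^ β j))
              = ((d / w i : ℕ) : ℂ) * c i + a * ((β i : ℕ) : ℂ) * 1 := by
                rw [← hxE, ← hxQ, ← hx1, ← hx2]; ring
            _ = 0 := by
                rw [hcdef]
                simp only
                have hcast : ((β i * w i : ℕ) : ℂ) = ((β i : ℕ) : ℂ) * ((w i : ℕ) : ℂ) := by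
                  push_cast; ring
                rw [hcast]
                field_simp
                linear_combination (-(a * ((β i : ℕ) : ℂ))) * hEwC i
        rcases mul_eq_zero.mp hmain with h | h
        · exact absurd h hxne
        · exact h
      · have hxi : x i = 0 := by rw [hxdef]; simp only [if_neg hik]
        rw [hxi, hβ0 i (le_of_not_gt hik)]
        rw [zero_pow (by have := hE2 i; omega : d / w i - 1 ≠ 0)]
        simp
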